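/- arXiv:2210.13613 — 4 statements merged into one kernel-verified Lean document; each statement's English description precedes it below -/
import Mathlib

section
/- Let n > 1 be a positive integer and define S(n) to be the maximum over all k ≥ 1 and all tuples of positive integers (n_1,...,n_k) with n_1 + ... + n_k = n of the product n_1 · ... · n_k. Then: if n ≡ 0 (mod 3) then S(n) = 3^{n/3}; if n ≡ 1 (mod 3) then S(n) = 4 · 3^{(n-4)/3}; if n ≡ 2 (mod 3) then S(n) = 2 · 3^{(n-2)/3}. -/
/-- The set of products `n₁ ⋯ n_k` over all nonempty tuples of positive integers
with sum `n`. -/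
def PartProds (n : ℕ) : Set ℕ :=
  {p | ∃ l : List ℕ, l ≠ [] ∧ (∀ x ∈ l, 0 < x) ∧ l.sum = n ∧ l.prod = p}

private def maxf : ℕ → ℕ
  | 0 => 1
  | 1 => 1
  | 2 => 2
  | 3 => 3
  | 4 => 4
  | (n+5) => 3 * maxf (n+2)

private lemma maxf_eq (m : ℕ) : maxf (m+5) = 3 * maxf (m+2) := rfl

private lemma L1 (n : ℕ) : maxf n ≤ maxf (n+1) := by
  induction n using Nat.strong_induction_on with
  | _ n ih =>
    match n with
    | 0 => decide
    | 1 => decide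
    | 2 => decide
    | 3 => decide
    | 4 => decide
    | (m+5) =>
      rw [maxf_eq, show m+5+1 = (m+1)+5 by omega, maxf_eq,
        show m+1+2 = (m+2)+1 by omega]
      have := ih (m+2) (by omega)
      omega

private lemma L3 (n : ℕ) : 3 * maxf n ≤ maxf (n+3) := by
  match n with
  | 0 => decide
  | 1 => decide
  | (m+2) => rw [show m+2+3 = m+5 by omega, maxf_eq]

private lemma L2 (n : ℕ) : 2 * maxf n ≤ maxf (n+2) := by
  induction n using Nat.strong_induction_on with
  | _ n ih =>
    match n with
    | 0 => decide
    | 1 => decide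
    | 2 => decide
    | 3 => decide
    | 4 => decide
    | (m+5) =>
      rw [maxf_eq, show m+5+2 = (m+2)+5 by omega, maxf_eq]
      have := ih (m+2) (by omega)
      omega

private lemma key (a b : ℕ) (ha : 1 ≤ a) : a * maxf b ≤ maxf (a + b) := by
  induction a using Nat.strong_induction_on with
  | _ a ih =>
    match a with
    | 1 => rw [show (1:ℕ)+b = b+1 by omega]; simpa using L1 b
    | 2 => rw [show (2:ℕ)+b = b+2 by omega]; exact L2 b
    | 3 => rw [show (3:ℕ)+b = b+3 by omega]; exact L3 b
    | 4 =>
      have h1 := L2 b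
      have h2 := L2 (b+2)
      rw [show (4:ℕ)+b = b+2+2 by omega]
      omega
    | (m+5) =>
      have ih' := ih (m+2) (by omega) (by omega)
      calc (m+5) * maxf b ≤ (3*(m+2)) * maxf b :=
            Nat.mul_le_mul_right _ (by omega)
        _ = 3 * ((m+2) * maxf b) := by ring
        _ ≤ 3 * maxf (m+2+b) := Nat.mul_le_mul_left _ ih'
        _ ≤ maxf (m+2+b+3) := L3 _
        _ = maxf (m+5+b) := by rw [show m+2+b+3 = m+5+b by omega]

private lemma ub (l : List ℕ) (h : ∀ x ∈ l, 0 < x) : l.prod ≤ maxf l.sum := by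
  induction l with
  | nil => simp [maxf]
  | cons a t ih =>
    simp only [List.prod_cons, List.sum_cons]
    calc a * t.prod ≤ a * maxf t.sum :=
          Nat.mul_le_mul_left _ (ih fun x hx => h x (List.mem_cons_of_mem _ hx))
      _ ≤ maxf (a + t.sum) := key a t.sum (h a List.mem_cons_self)

private lemma f0 : ∀ k, maxf (3*(k+1)) = 3^(k+1) := by
  intro k
  induction k with
  | zero => decide
  | succ j ih =>
    rw [show 3*(j+1+1) = (3*j+1)+5 by ring, maxf_eq,
      show 3*j+1+2 = 3*(j+1) by ring, ih]
    ring

private lemma f1 : ∀ k, maxf (3*k+4) = 4 * 3^k := by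
  intro k
  induction k with
  | zero => decide
  | succ j ih =>
    rw [show 3*(j+1)+4 = (3*j+2)+5 by ring, maxf_eq,
      show 3*j+2+2 = 3*j+4 by ring, ih]
    ring

private lemma f2 : ∀ k, maxf (3*k+2) = 2 * 3^k := by
  intro k
  induction k with
  | zero => decide
  | succ j ih =>
    rw [show 3*(j+1)+2 = (3*j)+5 by ring, maxf_eq, ih]
    ring

theorem max_product_of_partition (n : ℕ) (hn : 1 < n) :
    (n % 3 = 0 → IsGreatest (PartProds n) (3 ^ (n / 3))) ∧
    (n % 3 = 1 → IsGreatest (PartProds n) (4 * 3 ^ ((n - 4) / 3))) ∧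
    (n % 3 = 2 → IsGreatest (PartProds n) (2 * 3 ^ ((n - 2) / 3))) := by
  refine ⟨fun h => ?_, fun h => ?_, fun h => ?_⟩
  · -- n ≡ 0
    obtain ⟨j, hj⟩ : ∃ j, n = 3*(j+1) := ⟨n/3 - 1, by omega⟩
    have hdiv : n / 3 = j + 1 := by omega
    constructor
    · exact ⟨List.replicate (n/3) 3, by simp [hdiv], by simp, by
        simp [List.sum_replicate, hdiv]; omega, by simp [List.prod_replicate]⟩
    · rintro p ⟨l, -, hpos, hsum, hprod⟩
      have := ub l hpos
      rw [hsum, hj, f0 j] at this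
      rw [hdiv]
      omega
  · -- n ≡ 1
    obtain ⟨j, hj⟩ : ∃ j, n = 3*j+4 := ⟨(n-4)/3, by omega⟩
    have hdiv : (n-4) / 3 = j := by omega
    constructor
    · refine ⟨4 :: List.replicate j 3, by simp, by
        intro x hx; rcases List.mem_cons.mp hx with h' | h'
        · omega
        · have := List.eq_of_mem_replicate h'; omega, ?_, ?_⟩
      · simp [List.sum_replicate]; omega
      · simp [List.prod_replicate, hdiv]
    · rintro p ⟨l, -, hpos, hsum, hprod⟩
      have := ub l hpos
      rw [hsum, hj, f1 j] at this
      rw [hdiv]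
      omega
  · -- n ≡ 2
    obtain ⟨j, hj⟩ : ∃ j, n = 3*j+2 := ⟨(n-2)/3, by omega⟩
    have hdiv : (n-2) / 3 = j := by omega
    constructor
    · refine ⟨2 :: List.replicate j 3, by simp, by
        intro x hx; rcases List.mem_cons.mp hx with h' | h'
        · omega
        · have := List.eq_of_mem_replicate h'; omega, ?_, ?_⟩
      · simp [List.sum_replicate]; omega
      · simp [List.prod_replicate, hdiv]
    · rintro p ⟨l, -, hpos, hsum, hprod⟩
      have := ub l hpos
      rw [hsum, hj, f2 j] at this
      rw [hdiv]
      omega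
end

section
/- In the Three Rows Game on n columns, any outcome o with |o| = n (i.e. the history never uses the middle row) arises from exactly one history. Formally: if h, h' ∈ {T,B}^n are two histories using only top and bottom squares, where the history h contributes the value i-1 for a top choice in column i and the value i for a bottom choice in column i (columns indexed 1,...,n), and h and h' yield the same multiset of values, then h = h'. -/
lemma key_s13 (n i : ℕ) (g : Fin n → Bool) :
    (Finset.univ.filter (fun c : Fin n => (if g c then (c : ℕ) + 1 else (c : ℕ)) = i)).card =
    (if hi : i < n then (if g ⟨i, hi⟩ then 0 else 1) else 0) +
    (if hp : 0 < i ∧ i - 1 < n then (if g ⟨i - 1, hp.2⟩ then 1 else 0) else 0) := by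
  classical
  have hset : (Finset.univ.filter (fun c : Fin n => (if g c then (c : ℕ) + 1 else (c : ℕ)) = i))
      = (Finset.univ.filter (fun c : Fin n => g c = false ∧ (c : ℕ) = i)) ∪
        (Finset.univ.filter (fun c : Fin n => g c = true ∧ (c : ℕ) + 1 = i)) := by
    ext c
    simp only [Finset.mem_filter, Finset.mem_union, Finset.mem_univ, true_and]
    cases hgc : g c <;> simp
  rw [hset, Finset.card_union_of_disjoint]
  · congr 1
    · split_ifs with hi hg
      · -- g ⟨i,hi⟩ = true, so set empty
        rw [Finset.card_eq_zero]
        ext c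
        simp only [Finset.mem_filter, Finset.mem_univ, true_and, Finset.notMem_empty, iff_false]
        rintro ⟨hc, hv⟩
        have : c = ⟨i, hi⟩ := Fin.ext hv
        rw [this] at hc; simp [hg] at hc
      · rw [Finset.card_eq_one]
        refine ⟨⟨i, hi⟩, ?_⟩
        ext c
        simp only [Finset.mem_filter, Finset.mem_univ, true_and, Finset.mem_singleton]
        constructor
        · rintro ⟨hc, hv⟩; exact Fin.ext hv
        · rintro rfl; exact ⟨by simpa using hg, rfl⟩
      · rw [Finset.card_eq_zero]
        ext c
        simp only [Finset.mem_filter, Finset.mem_univ, true_and, Finset.notMem_empty, iff_false]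
        rintro ⟨_, hv⟩; exact hi (hv ▸ c.isLt)
    · split_ifs with hp hg
      · rw [Finset.card_eq_one]
        refine ⟨⟨i - 1, hp.2⟩, ?_⟩
        ext c; simp only [Finset.mem_filter, Finset.mem_univ, true_and, Finset.mem_singleton]
        constructor
        · rintro ⟨hc, hv⟩; exact Fin.ext (by simp only [Fin.val_mk]; omega)
        · rintro rfl; exact ⟨hg, by simp only [Fin.val_mk]; omega⟩
      · rw [Finset.card_eq_zero]
        ext c
        simp only [Finset.mem_filter, Finset.mem_univ, true_and, Finset.notMem_empty, iff_false]
        rintro ⟨hc, hv⟩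
        have : c = ⟨i - 1, hp.2⟩ := Fin.ext (by simp only [Fin.val_mk]; omega)
        rw [this] at hc; simp [hg] at hc
      · rw [Finset.card_eq_zero]
        ext c
        simp only [Finset.mem_filter, Finset.mem_univ, true_and, Finset.notMem_empty, iff_false]
        rintro ⟨hc, hv⟩
        exact hp ⟨by omega, by omega⟩
  · rw [Finset.disjoint_filter]
    rintro c _ ⟨hc, _⟩ ⟨hc', _⟩
    simp [hc] at hc'


/-- In the Three Rows Game on `n` columns (column `c : Fin n` has top square labelled `c`
and bottom square labelled `c+1`), a history using only top and bottom squares is a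
function `h : Fin n → Bool` (`false` = top, `true` = bottom); its outcome is the multiset
of chosen labels.  Two such histories with the same outcome are equal. -/
theorem maximal_outcome_unique (n : ℕ) (h h' : Fin n → Bool)
    (same : ∀ i : ℕ,
      (Finset.univ.filter (fun c : Fin n => (if h c then (c : ℕ) + 1 else (c : ℕ)) = i)).card =
      (Finset.univ.filter (fun c : Fin n => (if h' c then (c : ℕ) + 1 else (c : ℕ)) = i)).card) :
    h = h' := by
  have main : ∀ i (hi : i < n), h ⟨i, hi⟩ = h' ⟨i, hi⟩ := by
    intro i
    induction i with
    | zero =>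
      intro hi
      have := same 0
      rw [key_s13, key_s13] at this
      simp only [Nat.lt_irrefl, Nat.not_lt_zero, false_and, dite_false, add_zero, hi,
        dite_true] at this
      cases hh : h ⟨0, hi⟩ <;> cases hh' : h' ⟨0, hi⟩ <;> simp_all
    | succ i ih =>
      intro hi
      have hin : i < n := Nat.lt_of_succ_lt hi
      have := same (i + 1)
      rw [key_s13, key_s13] at this
      have hcond : 0 < i + 1 ∧ i + 1 - 1 < n := ⟨Nat.succ_pos i, by simpa using hin⟩
      rw [dif_pos hi, dif_pos hi, dif_pos hcond, dif_pos hcond] at this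
      have hprev : h ⟨i + 1 - 1, hcond.2⟩ = h' ⟨i + 1 - 1, hcond.2⟩ := ih hcond.2
      rw [hprev] at this
      have : (if h ⟨i + 1, hi⟩ then 0 else 1) = (if h' ⟨i + 1, hi⟩ then 0 else 1) :=
        Nat.add_right_cancel this
      cases hh : h ⟨i + 1, hi⟩ <;> cases hh' : h' ⟨i + 1, hi⟩ <;> simp_all
  funext c
  have := main c.val c.isLt
  simpa using this
end

section
/- In the Three Rows Game on n columns, a history that is a single pattern — i.e. consists of k bottom choices, then one middle choice, then n-1-k top choices, for some 0 ≤ k ≤ n-1 — has exactly n equivalent histories (including itself), and all of them are such patterns. Formally: the n histories h_k (k = 0,...,n-1) given by bottom in columns 1..k, middle in column k+1, top in columns k+2..n all yield the same outcome {1,2,...,n-1} (as a multiset), and no other history on n columns yields this outcome. -/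
/-- The outcome of a history `h` of the Three Rows Game on `n` columns, as a counting
function: column `c : Fin n` has top square (`h c = 0`) labelled `c`, blank middle square
(`h c = 1`), and bottom square (`h c = 2`) labelled `c + 1`. -/
def outcome (n : ℕ) (h : Fin n → Fin 3) (i : ℕ) : ℕ :=
  (Finset.univ.filter (fun c : Fin n => h c = 0 ∧ (c : ℕ) = i)).card +
  (Finset.univ.filter (fun c : Fin n => h c = 2 ∧ (c : ℕ) + 1 = i)).card

/-- The pattern history with `k` bottom choices, one middle choice, then top choices. -/
def pat (n k : ℕ) : Fin n → Fin 3 := fun c =>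
  if (c : ℕ) < k then 2 else if (c : ℕ) = k then 1 else 0

/-- The outcome `{1, …, n-1}` (each once). -/
def tgt (n : ℕ) : ℕ → ℕ := fun i => if 1 ≤ i ∧ i < n then 1 else 0

lemma card_filter_eq_idx (n i : ℕ) (p : Fin n → Prop) [DecidablePred p] :
    (Finset.univ.filter (fun c : Fin n => p c ∧ (c : ℕ) = i)).card =
      if hi : i < n then (if p ⟨i, hi⟩ then 1 else 0) else 0 := by
  split_ifs with hi hp
  · have : (Finset.univ.filter (fun c : Fin n => p c ∧ (c : ℕ) = i)) = {⟨i, hi⟩} := by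
      ext c
      simp only [Finset.mem_filter, Finset.mem_univ, true_and, Finset.mem_singleton]
      constructor
      · rintro ⟨_, h2⟩; exact Fin.ext h2
      · rintro rfl; exact ⟨hp, rfl⟩
    simp [this]
  · have : (Finset.univ.filter (fun c : Fin n => p c ∧ (c : ℕ) = i)) = ∅ := by
      ext c
      simp only [Finset.mem_filter, Finset.mem_univ, true_and, Finset.notMem_empty, iff_false]
      rintro ⟨h1, h2⟩
      exact hp (by have : c = ⟨i, hi⟩ := Fin.ext h2; rwa [← this])
    simp [this]
  · have : (Finset.univ.filter (fun c : Fin n => p c ∧ (c : ℕ) = i)) = ∅ := by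
      ext c
      simp only [Finset.mem_filter, Finset.mem_univ, true_and, Finset.notMem_empty, iff_false]
      rintro ⟨_, h2⟩
      exact hi (h2 ▸ c.isLt)
    simp [this]

lemma card_filter_succ_idx (n i : ℕ) (p : Fin n → Prop) [DecidablePred p] :
    (Finset.univ.filter (fun c : Fin n => p c ∧ (c : ℕ) + 1 = i)).card =
      if hi : 1 ≤ i ∧ i ≤ n then (if p ⟨i - 1, by omega⟩ then 1 else 0) else 0 := by
  split_ifs with hi hp
  · have : (Finset.univ.filter (fun c : Fin n => p c ∧ (c : ℕ) + 1 = i))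
        = {⟨i - 1, by omega⟩} := by
      ext c
      simp only [Finset.mem_filter, Finset.mem_univ, true_and, Finset.mem_singleton]
      constructor
      · rintro ⟨_, h2⟩; exact Fin.ext (show (c:ℕ) = i - 1 by omega)
      · rintro rfl; exact ⟨hp, by simp; omega⟩
    simp [this]
  · have : (Finset.univ.filter (fun c : Fin n => p c ∧ (c : ℕ) + 1 = i)) = ∅ := by
      ext c
      simp only [Finset.mem_filter, Finset.mem_univ, true_and, Finset.notMem_empty, iff_false]
      rintro ⟨h1, h2⟩
      have : c = (⟨i - 1, by omega⟩ : Fin n) := Fin.ext (show (c:ℕ) = i - 1 by omega)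
      exact hp (this ▸ h1)
    simp [this]
  · have : (Finset.univ.filter (fun c : Fin n => p c ∧ (c : ℕ) + 1 = i)) = ∅ := by
      ext c
      simp only [Finset.mem_filter, Finset.mem_univ, true_and, Finset.notMem_empty, iff_false]
      rintro ⟨_, h2⟩
      have := c.isLt
      omega
    simp [this]

lemma outcome_eq (n : ℕ) (h : Fin n → Fin 3) (i : ℕ) :
    outcome n h i =
      (if hi : i < n then (if h ⟨i, hi⟩ = 0 then 1 else 0) else 0) +
      (if hi : 1 ≤ i ∧ i ≤ n then (if h ⟨i - 1, by omega⟩ = 2 then 1 else 0) else 0) := by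
  unfold outcome
  rw [card_filter_eq_idx, card_filter_succ_idx]

lemma part1 (n : ℕ) : ∀ k < n, ∀ i, outcome n (pat n k) i = tgt n i := by
  intro k hk i
  rw [outcome_eq, tgt]
  simp only [pat]
  split_ifs <;> omega



/-- Extension of a history to all of `ℕ`. -/
def extf (n : ℕ) (h : Fin n → Fin 3) : ℕ → Fin 3 :=
  fun m => if hm : m < n then h ⟨m, hm⟩ else 0

lemma extf_coe (n : ℕ) (h : Fin n → Fin 3) (c : Fin n) : extf n h (c : ℕ) = h c :=
  dif_pos c.isLt

lemma outcome_eq' (n : ℕ) (h : Fin n → Fin 3) (i : ℕ) :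
    outcome n h i =
      (if extf n h i = 0 ∧ i < n then 1 else 0) +
      (if extf n h (i - 1) = 2 ∧ 1 ≤ i ∧ i ≤ n then 1 else 0) := by
  rw [outcome_eq]
  congr 1
  · by_cases a : i < n
    · rw [dif_pos a]
      have e : extf n h i = h ⟨i, a⟩ := dif_pos a
      rw [e]
      simp [a]
    · rw [dif_neg a]
      simp [a]
  · by_cases a : 1 ≤ i ∧ i ≤ n
    · rw [dif_pos a]
      have e : extf n h (i - 1) = h ⟨i - 1, by omega⟩ := dif_pos (by omega)
      rw [e]
      simp [a]
    · rw [dif_neg a]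
      simp [a]

lemma part2 (n : ℕ) (hn : 1 ≤ n) (h : Fin n → Fin 3)
    (H : ∀ i, outcome n h i = tgt n i) : ∃ k < n, h = pat n k := by
  set g : ℕ → Fin 3 := extf n h with hg
  have key : ∀ i, 1 ≤ i → i < n → (g i = 0 ↔ g (i - 1) ≠ 2) := by
    intro i h1 h2
    have h3 := H i
    rw [outcome_eq', tgt, ← hg] at h3
    constructor
    · intro hx hy
      rw [if_pos (show g i = 0 ∧ i < n from ⟨hx, h2⟩),
        if_pos (show g (i - 1) = 2 ∧ 1 ≤ i ∧ i ≤ n from ⟨hy, h1, by omega⟩),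
        if_pos (show 1 ≤ i ∧ i < n from ⟨h1, h2⟩)] at h3
      omega
    · intro hy
      by_contra hx
      rw [if_neg (show ¬(g i = 0 ∧ i < n) from fun w => hx w.1),
        if_neg (show ¬(g (i - 1) = 2 ∧ 1 ≤ i ∧ i ≤ n) from fun w => hy w.1),
        if_pos (show 1 ≤ i ∧ i < n from ⟨h1, h2⟩)] at h3
      omega
  have h0' : g 0 ≠ 0 := by
    intro hx
    have h3 := H 0
    rw [outcome_eq', tgt, ← hg] at h3
    rw [if_pos (show g 0 = 0 ∧ 0 < n from ⟨hx, by omega⟩),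
      if_neg (show ¬(g (0 - 1) = 2 ∧ 1 ≤ 0 ∧ 0 ≤ n) from fun w => absurd w.2.1 (by omega)),
      if_neg (show ¬(1 ≤ 0 ∧ 0 < n) from fun w => absurd w.1 (by omega))] at h3
    omega
  have hl' : g (n - 1) ≠ 2 := by
    intro hx
    have h3 := H n
    rw [outcome_eq', tgt, ← hg] at h3
    rw [if_neg (show ¬(g n = 0 ∧ n < n) from fun w => absurd w.2 (by omega)),
      if_pos (show g (n - 1) = 2 ∧ 1 ≤ n ∧ n ≤ n from ⟨hx, hn, le_refl n⟩),
      if_neg (show ¬(1 ≤ n ∧ n < n) from fun w => absurd w.2 (by omega))] at h3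
    omega
  have hex : ∃ m, g m ≠ 2 := ⟨n - 1, hl'⟩
  set k := Nat.find hex with hkdef
  have hk1 : g k ≠ 2 := Nat.find_spec hex
  have hk2 : ∀ m < k, g m = 2 := fun m hm => not_not.mp (Nat.find_min hex hm)
  have hkn : k < n := lt_of_le_of_lt (Nat.find_min' hex hl') (by omega)
  have hk0 : g k ≠ 0 := by
    rcases Nat.eq_zero_or_pos k with hz | hpos
    · rw [hz]; exact h0'
    · intro hx
      exact (key k hpos hkn).mp hx (hk2 (k - 1) (by omega))
  have hk1' : g k = 1 := by omega
  have htop : ∀ m, k < m → m < n → g m = 0 := by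
    intro m
    induction m with
    | zero => omega
    | succ j ih =>
      intro hm hmn
      have hj := key (j + 1) (by omega) hmn
      simp only [Nat.add_sub_cancel] at hj
      apply hj.mpr
      rcases eq_or_lt_of_le (Nat.lt_succ_iff.mp hm) with rfl | hkj
      · exact hk1
      · have h0 := ih hkj (by omega)
        rw [h0]; decide
  refine ⟨k, hkn, ?_⟩
  funext c
  rw [← extf_coe n h c, ← hg]
  unfold pat
  split_ifs with a b
  · exact hk2 c a
  · rw [b]; exact hk1'
  · exact htop c (by omega) c.isLt

/-- The `n` pattern histories `pat n k`, `0 ≤ k ≤ n-1`, all have outcome `{1,…,n-1}`,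
they are the only histories with this outcome, and hence this outcome has exactly `n`
histories. -/
theorem pattern_multiplicity (n : ℕ) (hn : 1 ≤ n) :
    (∀ k < n, ∀ i, outcome n (pat n k) i = tgt n i) ∧
    (∀ h : Fin n → Fin 3, (∀ i, outcome n h i = tgt n i) → ∃ k < n, h = pat n k) ∧
    Nat.card {h : Fin n → Fin 3 // ∀ i, outcome n h i = tgt n i} = n := by
  refine ⟨part1 n, part2 n hn, ?_⟩
  have bij : Function.Bijective
      (fun k : Fin n => (⟨pat n k, part1 n k k.isLt⟩ :
        {h : Fin n → Fin 3 // ∀ i, outcome n h i = tgt n i})) := by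
    constructor
    · intro a b hab
      have hab' : pat n ↑a = pat n ↑b := congrArg Subtype.val hab
      have h2 := congrFun hab' ⟨a, a.isLt⟩
      simp only [pat] at h2
      apply Fin.ext
      split_ifs at h2 <;> omega
    · rintro ⟨h, hh⟩
      obtain ⟨k, hk, rfl⟩ := part2 n hn h hh
      exact ⟨⟨k, hk⟩, rfl⟩
  have hc := Nat.card_eq_of_bijective _ bij
  rw [← hc, Nat.card_eq_fintype_card, Fintype.card_fin]
end

section
/- (Path Multiplicity Theorem, outcome form) Let o be an outcome of the Three Rows Game on n columns (a multiset of elements of {0,1,...,n}). A run of length k in o is a maximal set of k consecutive integers i, i+1, ..., i+k-1 ∈ {1,...,n-1}, each appearing exactly once in o, such that i-1 ∉ o and i+k ∉ o. Then the number of histories whose outcome is o equals the product over all runs r in o of (ℓ(r)+1), where ℓ(r) is the length of the run. -/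
open scoped Classical

/-- `(i, k)` is a run of length `k` in the outcome `o`: the `k` consecutive integers
`i, …, i+k-1 ∈ {1,…,n-1}` each appear exactly once in `o`, while `i-1 ∉ o` and
`i+k ∉ o`. -/
def IsRun (n : ℕ) (o : ℕ → ℕ) (i k : ℕ) : Prop :=
  1 ≤ i ∧ 1 ≤ k ∧ i + k ≤ n ∧ o (i - 1) = 0 ∧ o (i + k) = 0 ∧
    ∀ j, i ≤ j → j < i + k → o j = 1

/-- The finite set of runs of the outcome `o`, encoded as pairs (start, length). -/
noncomputable def runFinset (n : ℕ) (o : ℕ → ℕ) : Finset (ℕ × ℕ) :=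
  ((Finset.Icc 1 n) ×ˢ (Finset.Icc 1 n)).filter (fun p => IsRun n o p.1 p.2)

/-! ### auxiliary -/

def Om (F : ℕ → Fin 3) (i : ℕ) : ℕ :=
  (if F i = 0 then 1 else 0) + (if i ≠ 0 ∧ F (i - 1) = 2 then 1 else 0)

def GoodF (n : ℕ) (o : ℕ → ℕ) (F : ℕ → Fin 3) : Prop :=
  (∀ c, n ≤ c → F c = 1) ∧ (∀ i, Om F i = o i)

def extFn (n : ℕ) (h : Fin n → Fin 3) : ℕ → Fin 3 :=
  fun c => if hc : c < n then h ⟨c, hc⟩ else 1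

lemma outcome_eq_Om (n : ℕ) (h : Fin n → Fin 3) (i : ℕ) :
    outcome n h i = Om (extFn n h) i := by
  unfold outcome Om extFn
  congr 1
  · by_cases hi : i < n
    · by_cases h0 : h ⟨i, hi⟩ = 0
      · rw [dif_pos hi, if_pos h0]
        rw [Finset.card_eq_one]
        refine ⟨⟨i, hi⟩, ?_⟩
        ext c
        simp only [Finset.mem_filter, Finset.mem_univ, true_and, Finset.mem_singleton]
        constructor
        · rintro ⟨hc0, hci⟩; exact Fin.ext hci
        · rintro rfl; exact ⟨h0, rfl⟩
      · rw [dif_pos hi, if_neg h0, Finset.card_eq_zero]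
        ext c
        simp only [Finset.mem_filter, Finset.mem_univ, true_and, Finset.notMem_empty,
          iff_false, not_and]
        intro hc0 hci
        exact h0 (by rwa [show (⟨i, hi⟩ : Fin n) = c from (Fin.ext hci.symm)])
    · rw [dif_neg hi, if_neg (by decide)]
      rw [Finset.card_eq_zero]
      ext c
      simp only [Finset.mem_filter, Finset.mem_univ, true_and, Finset.notMem_empty,
        iff_false, not_and]
      intro _ hci
      exact hi (hci ▸ c.isLt)
  · by_cases hi : 1 ≤ i ∧ i - 1 < n
    · by_cases h2 : h ⟨i - 1, hi.2⟩ = 2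
      · rw [if_pos ⟨by omega, by rw [dif_pos hi.2]; exact h2⟩, Finset.card_eq_one]
        refine ⟨⟨i - 1, hi.2⟩, ?_⟩
        ext c
        simp only [Finset.mem_filter, Finset.mem_univ, true_and, Finset.mem_singleton]
        constructor
        · rintro ⟨hc2, hci⟩; exact Fin.ext (by simp only [Fin.val_mk]; omega)
        · rintro rfl; exact ⟨h2, by simp only [Fin.val_mk]; omega⟩
      · rw [if_neg, Finset.card_eq_zero]
        · ext c
          simp only [Finset.mem_filter, Finset.mem_univ, true_and, Finset.notMem_empty,
            iff_false, not_and]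
          intro hc2 hci
          exact h2 (by rwa [show (⟨i - 1, hi.2⟩ : Fin n) = c from (Fin.ext (by simp only [Fin.val_mk]; omega))])
        · rintro ⟨hi0, hF2⟩
          rw [dif_pos hi.2] at hF2
          exact h2 hF2
    · rw [if_neg, Finset.card_eq_zero]
      · ext c
        simp only [Finset.mem_filter, Finset.mem_univ, true_and, Finset.notMem_empty,
          iff_false, not_and]
        intro hc2 hci
        have := c.isLt
        omega
      · rintro ⟨hi0, hF2⟩
        rcases Nat.lt_or_ge (i-1) n with hlt | hge
        · exact hi ⟨by omega, hlt⟩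
        · rw [dif_neg (by omega)] at hF2
          exact (by decide : (1 : Fin 3) ≠ 2) hF2

section Basics

variable {n : ℕ} {o : ℕ → ℕ} {F : ℕ → Fin 3}

lemma fin3cases (x : Fin 3) : x = 0 ∨ x = 1 ∨ x = 2 := by revert x; decide

lemma omS (hFo : ∀ i, Om F i = o i) (c : ℕ) :
    o (c + 1) = (if F (c + 1) = 0 then 1 else 0) + (if F c = 2 then 1 else 0) := by
  rw [← hFo (c + 1)]
  unfold Om
  congr 1
  simp

lemma om0 (hFo : ∀ i, Om F i = o i) : o 0 = if F 0 = 0 then 1 else 0 := by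
  rw [← hFo 0]; unfold Om; simp

lemma o_le (hFo : ∀ i, Om F i = o i) (i : ℕ) : o i ≤ 2 := by
  rw [← hFo i]; unfold Om; split_ifs <;> omega

lemma o_tail (hFn : ∀ c, n ≤ c → F c = 1) (hFo : ∀ i, Om F i = o i)
    {i : ℕ} (hi : n < i) : o i = 0 := by
  rw [← hFo i]; unfold Om
  rw [hFn i (by omega), hFn (i - 1) (by omega)]
  simp

lemma F_ne_zero_of (hFo : ∀ i, Om F i = o i) {c : ℕ} (h : o c = 0) : F c ≠ 0 := by
  rw [← hFo c] at h; unfold Om at h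
  intro h0; rw [if_pos h0] at h; omega

lemma F_ne_two_of (hFo : ∀ i, Om F i = o i) {c : ℕ} (h : o (c + 1) = 0) : F c ≠ 2 := by
  rw [omS hFo c] at h
  intro h2; rw [if_pos h2] at h; omega

lemma F_eq_zero_of_two (hFo : ∀ i, Om F i = o i) {c : ℕ} (h : o c = 2) : F c = 0 := by
  rw [← hFo c] at h; unfold Om at h
  by_contra h0
  rw [if_neg h0] at h
  split_ifs at h <;> omega

lemma F_pred_eq_two_of_two (hFo : ∀ i, Om F i = o i) {c : ℕ} (h : o (c + 1) = 2) :
    F c = 2 := by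
  rw [omS hFo c] at h
  by_contra h2
  rw [if_neg h2] at h
  split_ifs at h <;> omega

lemma chain_top (hFo : ∀ i, Om F i = o i) {c : ℕ} (h1 : o (c + 1) = 1) (ht : F c ≠ 2) :
    F (c + 1) = 0 := by
  rw [omS hFo c, if_neg ht] at h1
  by_contra h0
  rw [if_neg h0] at h1; omega

lemma chain_bot (hFo : ∀ i, Om F i = o i) {c : ℕ} (h1 : o (c + 1) = 1)
    (hb : F (c + 1) ≠ 0) : F c = 2 := by
  rw [omS hFo c, if_neg hb] at h1
  by_contra h2
  rw [if_neg h2] at h1; omega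

lemma topC (hFo : ∀ i, Om F i = o i) :
    ∀ (c m : ℕ), F c ≠ 2 → (∀ j, c < j → j ≤ m → o j = 1) → c < m → F m = 0 := by
  intro c m
  induction m with
  | zero => intro _ _ h; omega
  | succ m ih =>
    intro hc2 hj hcm
    rcases Nat.lt_or_ge c m with h | h
    · have hm0 : F m = 0 := ih hc2 (fun j hj1 hj2 => hj j hj1 (by omega)) h
      exact chain_top hFo (hj (m + 1) (by omega) le_rfl) (by rw [hm0]; decide)
    · have hce : c = m := by omega
      subst hce
      exact chain_top hFo (hj (c + 1) (by omega) le_rfl) hc2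

lemma botC (hFo : ∀ i, Om F i = o i) :
    ∀ (k m : ℕ), F (m + k) = 2 → (∀ j, m < j → j ≤ m + k → o j = 1) → F m = 2 := by
  intro k
  induction k with
  | zero => intro m h _; simpa using h
  | succ k ih =>
    intro m h2 hj
    apply ih m ?_ (fun j h1 h2' => hj j h1 (by omega))
    have hmk : F (m + k + 1) = 2 := by
      have : m + (k + 1) = m + k + 1 := by omega
      rwa [this] at h2
    exact chain_bot hFo (hj (m + k + 1) (by omega) (by omega)) (by rw [hmk]; decide)

end Basics

/-! ### chain ends -/

noncomputable def Dend (o : ℕ → ℕ) (j : ℕ) : ℕ := sInf {m | j ≤ m ∧ o m ≠ 1}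

noncomputable def Lend (o : ℕ → ℕ) (j : ℕ) : ℕ := sInf {l | ∀ m, l ≤ m → m ≤ j → o m = 1}

lemma Dend_spec {o : ℕ → ℕ} {j : ℕ} (hne : ∃ m, j ≤ m ∧ o m ≠ 1) :
    j ≤ Dend o j ∧ o (Dend o j) ≠ 1 :=
  Nat.sInf_mem (s := {m | j ≤ m ∧ o m ≠ 1}) hne

lemma Dend_min {o : ℕ → ℕ} {j : ℕ} : ∀ m, j ≤ m → m < Dend o j → o m = 1 := by
  intro m h1 h2
  have hm := Nat.notMem_of_lt_sInf h2
  simp only [Set.mem_setOf_eq, not_and, not_not] at hm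
  exact hm h1

lemma Lend_spec (o : ℕ → ℕ) (j : ℕ) : ∀ m, Lend o j ≤ m → m ≤ j → o m = 1 :=
  Nat.sInf_mem (s := {l | ∀ m, l ≤ m → m ≤ j → o m = 1})
    ⟨j + 1, fun m h1 h2 => absurd (h1.trans h2) (by omega)⟩

lemma Lend_pred {o : ℕ → ℕ} {j : ℕ} (h1 : 1 ≤ Lend o j) :
    Lend o j - 1 ≤ j ∧ o (Lend o j - 1) ≠ 1 := by
  have hm := Nat.notMem_of_lt_sInf (show Lend o j - 1 < Lend o j by omega)
  simp only [Set.mem_setOf_eq, not_forall] at hm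
  obtain ⟨m, hm1, hm2, hm3⟩ := hm
  have hme : m = Lend o j - 1 := by
    by_contra hne
    exact hm3 (Lend_spec o j m (by omega) hm2)
  subst hme
  exact ⟨hm2, hm3⟩

def InBlock (n : ℕ) (o : ℕ → ℕ) (c : ℕ) : Prop :=
  ∃ i k, IsRun n o i k ∧ i - 1 ≤ c ∧ c ≤ i + k - 1

noncomputable def detVal (n : ℕ) (o : ℕ → ℕ) (c : ℕ) : Fin 3 :=
  if o (c + 1) = 2 then 2
  else if o (c + 1) = 1 then
    (if o (Dend o (c + 1)) = 2 ∨ n + 1 ≤ Dend o (c + 1) then 2 else 0)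
  else if o c = 0 then 1 else 0

section Det

variable {n : ℕ} {o : ℕ → ℕ} {F : ℕ → Fin 3}

lemma det (hFn : ∀ c, n ≤ c → F c = 1) (hFo : ∀ i, Om F i = o i)
    {c : ℕ} (hcn : c < n) (hcb : ¬ InBlock n o c) : F c = detVal n o c := by
  unfold detVal
  by_cases h2 : o (c + 1) = 2
  · rw [if_pos h2]; exact F_pred_eq_two_of_two hFo h2
  rw [if_neg h2]
  by_cases h1 : o (c + 1) = 1
  · rw [if_pos h1]
    have hne : ∃ m, c + 1 ≤ m ∧ o m ≠ 1 :=
      ⟨n + 1, by omega, by rw [o_tail hFn hFo (by omega)]; omega⟩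
    have hDs := Dend_spec hne
    have hDm := Dend_min (o := o) (j := c + 1)
    set D := Dend o (c + 1) with hD
    have hDle : D ≤ n + 1 :=
      Nat.sInf_le ⟨by omega, by rw [o_tail hFn hFo (by omega)]; omega⟩
    have hD2 : c + 2 ≤ D := by
      rcases Nat.lt_or_ge (c + 1) D with hh | hh
      · omega
      · exfalso; have : D = c + 1 := by omega
        rw [this] at hDs; exact hDs.2 h1
    by_cases hbad : o D = 2 ∨ n + 1 ≤ D
    · rw [if_pos hbad]
      rcases hbad with hb | hb
      · have hF2 : F (D - 1) = 2 := by
          have := F_pred_eq_two_of_two hFo (c := D - 1)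
            (by rw [show D - 1 + 1 = D by omega]; exact hb)
          exact this
        apply botC hFo (D - 1 - c) c (by rw [show c + (D - 1 - c) = D - 1 by omega]; exact hF2)
        intro j hj1 hj2
        exact hDm j (by omega) (by omega)
      · have hon : o n = 1 := hDm n (by omega) (by omega)
        have hF2 : F (n - 1) = 2 := by
          have h := omS hFo (n - 1)
          rw [show n - 1 + 1 = n from by omega, hon, hFn n le_rfl] at h
          rw [if_neg (by decide : ¬ (1 : Fin 3) = 0)] at h
          by_contra hh
          rw [if_neg hh] at h; omega
        apply botC hFo (n - 1 - c) c (by rw [show c + (n - 1 - c) = n - 1 by omega]; exact hF2)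
        intro j hj1 hj2
        exact hDm j (by omega) (by omega)
    · rw [if_neg hbad]
      push_neg at hbad
      have hoD : o D = 0 := by
        have := o_le hFo D
        have := hDs.2
        omega
      have hDn : D ≤ n := by omega
      have hLs := Lend_spec o (c + 1)
      set L := Lend o (c + 1) with hL
      have hLle : L ≤ c + 1 := Nat.sInf_le (fun m hm1 hm2 => by
        have : m = c + 1 := by omega
        rw [this]; exact h1)
      by_cases hLc : L ≤ c
      · have hrun : ¬ (1 ≤ L ∧ o (L - 1) = 0) := by
          rintro ⟨hL1, hL0⟩
          apply hcb
          refine ⟨L, D - L, ⟨hL1, by omega, by omega, hL0,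
            by rw [show L + (D - L) = D by omega]; exact hoD, ?_⟩, by omega, by omega⟩
          intro j hj1 hj2
          rcases le_or_gt j (c + 1) with hh | hh
          · exact hLs j hj1 hh
          · exact hDm j (by omega) (by omega)
        rcases Nat.eq_zero_or_pos L with hL0 | hL1
        · have ho0 : o 0 = 1 := hLs 0 (by omega) (by omega)
          have hF0 : F 0 = 0 := by
            rw [om0 hFo] at ho0
            by_contra hh; rw [if_neg hh] at ho0; omega
          rcases Nat.eq_zero_or_pos c with rfl | hc1
          · exact hF0
          · exact topC hFo 0 c (by rw [hF0]; decide)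
              (fun j hj1 hj2 => hLs j (by omega) (by omega)) hc1
        · have hpred := Lend_pred (o := o) (j := c + 1) hL1
          rw [← hL] at hpred
          have hoL : o (L - 1) = 2 := by
            have h3 := o_le hFo (L - 1)
            have h4 : ¬ (o (L - 1) = 0) := fun hh => hrun ⟨hL1, hh⟩
            have h5 := hpred.2
            omega
          have hFL : F (L - 1) = 0 := F_eq_zero_of_two hFo hoL
          exact topC hFo (L - 1) c (by rw [hFL]; decide)
            (fun j hj1 hj2 => hLs j (by omega) (by omega)) (by omega)
      · have hoc : o c ≠ 1 := by
          intro hh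
          have : L ≤ c := Nat.sInf_le (fun m hm1 hm2 => by
            rcases Nat.lt_or_ge m (c + 1) with h' | h'
            · have : m = c := by omega
              rw [this]; exact hh
            · have : m = c + 1 := by omega
              rw [this]; exact h1)
          omega
        have hrun : ¬ (o c = 0) := by
          intro hoc0
          apply hcb
          refine ⟨c + 1, D - (c + 1), ⟨by omega, by omega, by omega,
            by simpa using hoc0,
            by rw [show c + 1 + (D - (c + 1)) = D by omega]; exact hoD, ?_⟩, by omega, by omega⟩
          intro j hj1 hj2
          exact hDm j (by omega) (by omega)
        have hoc2 : o c = 2 := by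
          have := o_le hFo c
          omega
        exact F_eq_zero_of_two hFo hoc2
  · rw [if_neg h1]
    have h0 : o (c + 1) = 0 := by
      have := o_le hFo (c + 1)
      omega
    have hne2 : F c ≠ 2 := F_ne_two_of hFo h0
    by_cases hc0 : o c = 0
    · rw [if_pos hc0]
      have hne0 : F c ≠ 0 := F_ne_zero_of hFo hc0
      rcases fin3cases (F c) with h | h | h
      · exact absurd h hne0
      · exact h
      · exact absurd h hne2
    · rw [if_neg hc0]
      by_cases hc2 : o c = 2
      · exact F_eq_zero_of_two hFo hc2
      · have hoc1 : o c = 1 := by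
          have := o_le hFo c
          omega
        have hLs := Lend_spec o c
        set L := Lend o c with hL
        have hLle : L ≤ c := Nat.sInf_le (fun m hm1 hm2 => by
          have : m = c := by omega
          rw [this]; exact hoc1)
        have hrun : ¬ (1 ≤ L ∧ o (L - 1) = 0) := by
          rintro ⟨hL1, hL0⟩
          apply hcb
          refine ⟨L, c + 1 - L, ⟨hL1, by omega, by omega, hL0,
            by rw [show L + (c + 1 - L) = c + 1 by omega]; exact h0, ?_⟩, by omega, by omega⟩
          intro j hj1 hj2
          exact hLs j hj1 (by omega)
        rcases Nat.eq_zero_or_pos L with hL0 | hL1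
        · have ho0 : o 0 = 1 := hLs 0 (by omega) (by omega)
          have hF0 : F 0 = 0 := by
            rw [om0 hFo] at ho0
            by_contra hh; rw [if_neg hh] at ho0; omega
          rcases Nat.eq_zero_or_pos c with rfl | hc1
          · exact hF0
          · exact topC hFo 0 c (by rw [hF0]; decide)
              (fun j hj1 hj2 => hLs j (by omega) (by omega)) hc1
        · have hpred := Lend_pred (o := o) (j := c) hL1
          rw [← hL] at hpred
          have hoL : o (L - 1) = 2 := by
            have h3 := o_le hFo (L - 1)
            have h4 : ¬ (o (L - 1) = 0) := fun hh => hrun ⟨hL1, hh⟩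
            have h5 := hpred.2
            omega
          have hFL : F (L - 1) = 0 := F_eq_zero_of_two hFo hoL
          exact topC hFo (L - 1) c (by rw [hFL]; decide)
            (fun j hj1 hj2 => hLs j (by omega) (by omega)) (by omega)

end Det

/-! ### block structure -/

noncomputable def midOf (F : ℕ → Fin 3) (i : ℕ) : ℕ := sInf {m | i - 1 ≤ m ∧ F m ≠ 2}

section Str

variable {n : ℕ} {o : ℕ → ℕ} {F : ℕ → Fin 3}

lemma str (hFo : ∀ i, Om F i = o i) {i k : ℕ} (hr : IsRun n o i k) :
    ∃ t, t ≤ k ∧ ∀ c, i - 1 ≤ c → c ≤ i + k - 1 →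
      F c = if c < i - 1 + t then 2 else if c = i - 1 + t then 1 else 0 := by
  obtain ⟨hi1, hk1, hikn, ho1, ho2, hoj⟩ := hr
  have hlast : F (i + k - 1) ≠ 2 := by
    apply F_ne_two_of hFo (c := i + k - 1)
    rw [show i + k - 1 + 1 = i + k by omega]; exact ho2
  set s := sInf {m | i - 1 ≤ m ∧ F m ≠ 2} with hs
  have hmem : i - 1 ≤ s ∧ F s ≠ 2 :=
    Nat.sInf_mem (s := {m | i - 1 ≤ m ∧ F m ≠ 2}) ⟨i + k - 1, by omega, hlast⟩
  have hsle : s ≤ i + k - 1 := Nat.sInf_le ⟨by omega, hlast⟩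
  have hbelow : ∀ m, i - 1 ≤ m → m < s → F m = 2 := by
    intro m hm1 hm2
    have hmm := Nat.notMem_of_lt_sInf (hs ▸ hm2)
    simp only [Set.mem_setOf_eq, not_and, not_not] at hmm
    exact hmm hm1
  have hsval : F s = 1 := by
    have hs0 : F s ≠ 0 := by
      rcases Nat.eq_or_lt_of_le hmem.1 with he | hlt
      · apply F_ne_zero_of hFo
        rw [← he]; exact ho1
      · have hprev : F (s - 1) = 2 := hbelow (s - 1) (by omega) (by omega)
        have hos : o s = 1 := hoj s (by omega) (by omega)
        have hh := omS hFo (s - 1)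
        rw [show s - 1 + 1 = s by omega, if_pos hprev, hos] at hh
        intro h0
        rw [if_pos h0] at hh; omega
    rcases fin3cases (F s) with h | h | h
    · exact absurd h hs0
    · exact h
    · exact absurd h hmem.2
  have habove : ∀ m, s < m → m ≤ i + k - 1 → F m = 0 := by
    intro m hm1 hm2
    exact topC hFo s m (by rw [hsval]; decide)
      (fun j hj1 hj2 => hoj j (by omega) (by omega)) hm1
  refine ⟨s - (i - 1), by omega, ?_⟩
  intro c hc1 hc2
  rw [show i - 1 + (s - (i - 1)) = s by omega]
  rcases lt_trichotomy c s with h | h | h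
  · rw [if_pos h]; exact hbelow c hc1 h
  · rw [if_neg (by omega), if_pos h]
    rw [h]; exact hsval
  · rw [if_neg (by omega), if_neg (by omega)]; exact habove c h hc2

lemma midOf_eq {i k t : ℕ} (hi1 : 1 ≤ i) (ht : t ≤ k)
    (hpat : ∀ c, i - 1 ≤ c → c ≤ i + k - 1 →
      F c = if c < i - 1 + t then 2 else if c = i - 1 + t then 1 else 0) :
    midOf F i = i - 1 + t := by
  unfold midOf
  apply le_antisymm
  · apply Nat.sInf_le
    refine ⟨by omega, ?_⟩
    rw [hpat _ (by omega) (by omega), if_neg (lt_irrefl _), if_pos rfl]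
    decide
  · by_contra hlt
    push_neg at hlt
    have hmem : i - 1 ≤ sInf {m | i - 1 ≤ m ∧ F m ≠ 2} ∧
        F (sInf {m | i - 1 ≤ m ∧ F m ≠ 2}) ≠ 2 := by
      apply Nat.sInf_mem (s := {m | i - 1 ≤ m ∧ F m ≠ 2})
      refine ⟨i - 1 + t, by omega, ?_⟩
      rw [hpat _ (by omega) (by omega), if_neg (lt_irrefl _), if_pos rfl]
      decide
    apply hmem.2
    rw [hpat _ hmem.1 (by omega), if_pos (by omega)]

end Str

lemma mem_runFinset {n : ℕ} {o : ℕ → ℕ} {p : ℕ × ℕ} :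
    p ∈ runFinset n o ↔ IsRun n o p.1 p.2 := by
  unfold runFinset
  simp only [Finset.mem_filter, Finset.mem_product, Finset.mem_Icc]
  constructor
  · tauto
  · intro h
    have h1 := h.1
    have h2 := h.2.1
    have h3 := h.2.2.1
    exact ⟨⟨⟨h1, by omega⟩, ⟨h2, by omega⟩⟩, h⟩

attribute [irreducible] runFinset

lemma run_disj {n : ℕ} {o : ℕ → ℕ} {i k i' k' c : ℕ} (h1 : IsRun n o i k)
    (h2 : IsRun n o i' k') (hc1 : i - 1 ≤ c ∧ c ≤ i + k - 1)
    (hc2 : i' - 1 ≤ c ∧ c ≤ i' + k' - 1) : i = i' ∧ k = k' := by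
  obtain ⟨hi1, hk1, hikn, ho1, ho2, hoj⟩ := h1
  obtain ⟨hi1', hk1', hikn', ho1', ho2', hoj'⟩ := h2
  have hii : i = i' := by
    by_contra hne
    rcases Nat.lt_or_ge i i' with h | h
    · have : o (i' - 1) = 1 := hoj (i' - 1) (by omega) (by omega)
      omega
    · have : o (i - 1) = 1 := hoj' (i - 1) (by omega) (by omega)
      omega
  subst hii
  refine ⟨rfl, ?_⟩
  by_contra hne
  rcases Nat.lt_or_ge k k' with h | h
  · have : o (i + k) = 1 := hoj' (i + k) (by omega) (by omega)
    omega
  · have : o (i + k') = 1 := hoj (i + k') (by omega) (by omega)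
    omega

/-! ### patch -/

section Patch

variable {n : ℕ} {o : ℕ → ℕ} {F₀ : ℕ → Fin 3}

noncomputable def patch (n : ℕ) (o : ℕ → ℕ) (F₀ : ℕ → Fin 3)
    (f : ∀ p : {p : ℕ × ℕ // p ∈ runFinset n o}, Fin (p.1.2 + 1)) (c : ℕ) : Fin 3 :=
  if h : ∃ p : {p : ℕ × ℕ // p ∈ runFinset n o}, p.1.1 - 1 ≤ c ∧ c ≤ p.1.1 + p.1.2 - 1 then
    (if c < h.choose.1.1 - 1 + (f h.choose : ℕ) then 2
     else if c = h.choose.1.1 - 1 + (f h.choose : ℕ) then 1 else 0)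
  else F₀ c

lemma patch_in {f : ∀ p : {p : ℕ × ℕ // p ∈ runFinset n o}, Fin (p.1.2 + 1)}
    (p : {p : ℕ × ℕ // p ∈ runFinset n o}) {c : ℕ}
    (hc1 : p.1.1 - 1 ≤ c) (hc2 : c ≤ p.1.1 + p.1.2 - 1) :
    patch n o F₀ f c =
      (if c < p.1.1 - 1 + (f p : ℕ) then 2
       else if c = p.1.1 - 1 + (f p : ℕ) then 1 else 0) := by
  unfold patch
  have hex : ∃ q : {p : ℕ × ℕ // p ∈ runFinset n o},
      q.1.1 - 1 ≤ c ∧ c ≤ q.1.1 + q.1.2 - 1 := ⟨p, hc1, hc2⟩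
  rw [dif_pos hex]
  have hq := hex.choose_spec
  have heq : hex.choose = p := by
    have hd := run_disj (mem_runFinset.mp hex.choose.2) (mem_runFinset.mp p.2)
      ⟨hq.1, hq.2⟩ ⟨hc1, hc2⟩
    exact Subtype.ext (Prod.ext hd.1 hd.2)
  rw [heq]

lemma patch_out {f : ∀ p : {p : ℕ × ℕ // p ∈ runFinset n o}, Fin (p.1.2 + 1)}
    {c : ℕ} (hcb : ¬ InBlock n o c) : patch n o F₀ f c = F₀ c := by
  unfold patch
  rw [dif_neg]
  rintro ⟨p, hp1, hp2⟩
  exact hcb ⟨p.1.1, p.1.2, mem_runFinset.mp p.2, hp1, hp2⟩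

lemma patch_Om (hF₀ : GoodF n o F₀)
    (f : ∀ p : {p : ℕ × ℕ // p ∈ runFinset n o}, Fin (p.1.2 + 1)) (j : ℕ) :
    Om (patch n o F₀ f) j = o j := by
  by_cases hB1 : ∃ p : {p : ℕ × ℕ // p ∈ runFinset n o}, p.1.1 ≤ j ∧ j ≤ p.1.1 + p.1.2 - 1
  · obtain ⟨p, hj1, hj2⟩ := hB1
    obtain ⟨hi1, hk1, hikn, ho1, ho2, hoj⟩ := mem_runFinset.mp p.2
    have ht : (f p : ℕ) ≤ p.1.2 := by have := (f p).isLt; omega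
    have hoj1 : o j = 1 := hoj j hj1 (by omega)
    have hGj : patch n o F₀ f j = _ := patch_in (f := f) p (c := j) (by omega) hj2
    have hGj1 : patch n o F₀ f (j - 1) = _ :=
      patch_in (f := f) p (c := j - 1) (by omega) (by omega)
    unfold Om
    rw [hoj1]
    rcases le_or_gt j (p.1.1 - 1 + (f p : ℕ)) with hle | hgt
    · have h0 : patch n o F₀ f j ≠ 0 := by
        rw [hGj]; split_ifs with ha hb
        · decide
        · decide
        · omega
      have h2 : patch n o F₀ f (j - 1) = 2 := by rw [hGj1, if_pos (by omega)]
      rw [if_neg h0, if_pos ⟨by omega, h2⟩]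
    · have h0 : patch n o F₀ f j = 0 := by
        rw [hGj, if_neg (by omega), if_neg (by omega)]
      have h2 : patch n o F₀ f (j - 1) ≠ 2 := by
        rw [hGj1]; split_ifs with ha hb
        · omega
        · decide
        · decide
      rw [if_pos h0, if_neg (fun hh => h2 hh.2)]
  by_cases hB2 : ∃ p : {p : ℕ × ℕ // p ∈ runFinset n o}, j + 1 = p.1.1
  · obtain ⟨p, hji⟩ := hB2
    obtain ⟨hi1, hk1, hikn, ho1, ho2, hoj⟩ := mem_runFinset.mp p.2
    have ht : (f p : ℕ) ≤ p.1.2 := by have := (f p).isLt; omega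
    have hoj0 : o j = 0 := by
      rw [show j = p.1.1 - 1 by omega]; exact ho1
    have hGj : patch n o F₀ f j ≠ 0 := by
      rw [patch_in (f := f) p (c := j) (by omega) (by omega)]
      split_ifs with ha hb
      · decide
      · decide
      · omega
    have h2 : ¬ (j ≠ 0 ∧ patch n o F₀ f (j - 1) = 2) := by
      rintro ⟨hj0, hG2⟩
      by_cases hcb : InBlock n o (j - 1)
      · obtain ⟨i', k', hr', hc1', hc2'⟩ := hcb
        have hi1' := hr'.1
        have hk1' := hr'.2.1
        have hlast : j - 1 = i' + k' - 1 := by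
          by_contra hne
          have hji' : j ≥ i' := by omega
          have : o j = 1 := hr'.2.2.2.2.2 j hji' (by omega)
          omega
        set q : {p : ℕ × ℕ // p ∈ runFinset n o} := ⟨(i', k'), mem_runFinset.mpr hr'⟩ with hqdef
        have hq1 : q.1.1 = i' := rfl
        have hq2 : q.1.2 = k' := rfl
        have ht' : (f q : ℕ) ≤ k' := by have := (f q).isLt; omega
        rw [patch_in (f := f) q (c := j - 1) (by rw [hq1]; omega)
          (by rw [hq1, hq2]; omega)] at hG2
        rw [hq1] at hG2
        split_ifs at hG2 with ha hb
        · omega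
        · exact (by decide : ¬ (1 : Fin 3) = 2) hG2
        · exact (by decide : ¬ (0 : Fin 3) = 2) hG2
      · rw [patch_out hcb] at hG2
        exact F_ne_two_of hF₀.2 (by rw [show j - 1 + 1 = j by omega]; exact hoj0) hG2
    unfold Om
    rw [if_neg hGj, if_neg h2, hoj0]
  by_cases hB3 : ∃ p : {p : ℕ × ℕ // p ∈ runFinset n o}, j = p.1.1 + p.1.2
  · obtain ⟨p, hji⟩ := hB3
    obtain ⟨hi1, hk1, hikn, ho1, ho2, hoj⟩ := mem_runFinset.mp p.2
    have ht : (f p : ℕ) ≤ p.1.2 := by have := (f p).isLt; omega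
    have hoj0 : o j = 0 := by rw [hji]; exact ho2
    have h2 : patch n o F₀ f (j - 1) ≠ 2 := by
      rw [patch_in (f := f) p (c := j - 1) (by omega) (by omega)]
      split_ifs with ha hb
      · omega
      · decide
      · decide
    have hGj : patch n o F₀ f j ≠ 0 := by
      by_cases hcb : InBlock n o j
      · obtain ⟨i', k', hr', hc1', hc2'⟩ := hcb
        have hi1' := hr'.1
        have hk1' := hr'.2.1
        have hfirst : j = i' - 1 := by
          by_contra hne
          have hji' : j ≥ i' := by omega
          have : o j = 1 := hr'.2.2.2.2.2 j hji' (by omega)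
          omega
        set q : {p : ℕ × ℕ // p ∈ runFinset n o} := ⟨(i', k'), mem_runFinset.mpr hr'⟩ with hqdef
        have hq1 : q.1.1 = i' := rfl
        have hq2 : q.1.2 = k' := rfl
        have ht' : (f q : ℕ) ≤ k' := by have := (f q).isLt; omega
        rw [patch_in (f := f) q (c := j) (by rw [hq1]; omega) (by rw [hq1, hq2]; omega)]
        rw [hq1]
        split_ifs with ha hb
        · decide
        · decide
        · omega
      · rw [patch_out hcb]
        exact F_ne_zero_of hF₀.2 hoj0
    unfold Om
    rw [if_neg hGj, if_neg (fun hh => h2 hh.2), hoj0]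
  · have hj : ¬ InBlock n o j := by
      rintro ⟨i, k, hr, hc1, hc2⟩
      by_cases hji : j + 1 = i
      · exact hB2 ⟨⟨(i, k), mem_runFinset.mpr hr⟩, hji⟩
      · refine hB1 ⟨⟨(i, k), mem_runFinset.mpr hr⟩, ?_, ?_⟩
        · show i ≤ j
          have := hr.1; omega
        · exact hc2
    have hj1 : j = 0 ∨ ¬ InBlock n o (j - 1) := by
      rcases Nat.eq_zero_or_pos j with rfl | hj0
      · exact Or.inl rfl
      · right
        rintro ⟨i, k, hr, hc1, hc2⟩
        by_cases hji : j = i + k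
        · exact hB3 ⟨⟨(i, k), mem_runFinset.mpr hr⟩, hji⟩
        · refine hB1 ⟨⟨(i, k), mem_runFinset.mpr hr⟩, ?_, ?_⟩
          · show i ≤ j
            have := hr.1; omega
          · show j ≤ i + k - 1
            have := hr.2.1; omega
    rcases hj1 with rfl | hnb
    · have h0 := hF₀.2 0
      unfold Om at h0 ⊢
      rw [show (0 : ℕ) - 1 = 0 by omega] at h0 ⊢
      rw [patch_out hj]
      exact h0
    · have h0 := hF₀.2 j
      unfold Om at h0 ⊢
      rw [patch_out hj, patch_out hnb]
      exact h0

end Patch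

section Final

variable {n : ℕ} {o : ℕ → ℕ}

lemma patch_mid {F₀ : ℕ → Fin 3}
    (f : ∀ p : {p : ℕ × ℕ // p ∈ runFinset n o}, Fin (p.1.2 + 1))
    (p : {p : ℕ × ℕ // p ∈ runFinset n o}) :
    midOf (patch n o F₀ f) p.1.1 = p.1.1 - 1 + (f p : ℕ) := by
  have hr := mem_runFinset.mp p.2
  have ht : (f p : ℕ) ≤ p.1.2 := by have := (f p).isLt; omega
  exact midOf_eq hr.1 ht (fun c hc1 hc2 => patch_in p hc1 hc2)

lemma good_inj {F G : ℕ → Fin 3} (hF : GoodF n o F) (hG : GoodF n o G)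
    (hmid : ∀ p : {p : ℕ × ℕ // p ∈ runFinset n o}, midOf F p.1.1 = midOf G p.1.1) :
    F = G := by
  funext c
  rcases Nat.lt_or_ge c n with hcn | hcn
  · by_cases hib : InBlock n o c
    · obtain ⟨i, k, hr, hc1, hc2⟩ := hib
      obtain ⟨t, ht, hpat⟩ := str hF.2 hr
      obtain ⟨t', ht', hpat'⟩ := str hG.2 hr
      have h1 : midOf F i = i - 1 + t := midOf_eq hr.1 ht hpat
      have h2 : midOf G i = i - 1 + t' := midOf_eq hr.1 ht' hpat'
      have h3 : midOf F i = midOf G i := hmid ⟨(i, k), mem_runFinset.mpr hr⟩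
      have htt : t = t' := by omega
      rw [hpat c hc1 hc2, hpat' c hc1 hc2, htt]
    · rw [det hF.1 hF.2 hcn hib, det hG.1 hG.2 hcn hib]
  · rw [hF.1 c hcn, hG.1 c hcn]

lemma block_lt {c : ℕ} (hib : InBlock n o c) : c < n := by
  obtain ⟨i, k, hr, hc1, hc2⟩ := hib
  have := hr.1
  have := hr.2.1
  have := hr.2.2.1
  omega

lemma extGood {h₀ : Fin n → Fin 3} (hh₀ : ∀ i, outcome n h₀ i = o i) :
    GoodF n o (extFn n h₀) :=
  ⟨fun c hc => by unfold extFn; rw [dif_neg (by omega)],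
   fun i => by rw [← outcome_eq_Om]; exact hh₀ i⟩

lemma patch_good {F₀ : ℕ → Fin 3} (hF₀ : GoodF n o F₀)
    (f : ∀ p : {p : ℕ × ℕ // p ∈ runFinset n o}, Fin (p.1.2 + 1)) :
    GoodF n o (patch n o F₀ f) :=
  ⟨fun c hc => by
      rw [patch_out (fun hib => absurd (block_lt hib) (by omega))]
      exact hF₀.1 c hc,
   patch_Om hF₀ f⟩

lemma midOf_sub_lt {F : ℕ → Fin 3} (hF : GoodF n o F)
    (p : {p : ℕ × ℕ // p ∈ runFinset n o}) :
    midOf F p.1.1 - (p.1.1 - 1) < p.1.2 + 1 := by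
  obtain ⟨t, ht, hpat⟩ := str hF.2 (mem_runFinset.mp p.2)
  rw [midOf_eq (mem_runFinset.mp p.2).1 ht hpat]
  omega

noncomputable def toMid (F : ℕ → Fin 3) (hF : GoodF n o F)
    (p : {p : ℕ × ℕ // p ∈ runFinset n o}) : Fin (p.1.2 + 1) :=
  ⟨midOf F p.1.1 - (p.1.1 - 1), midOf_sub_lt hF p⟩

lemma gleft {h₀ : Fin n → Fin 3} (hh₀ : ∀ i, outcome n h₀ i = o i)
    {F : ℕ → Fin 3} (hF : GoodF n o F) :
    patch n o (extFn n h₀) (toMid F hF) = F := by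
  apply good_inj (patch_good (extGood hh₀) _) hF
  intro p
  rw [patch_mid]
  show p.1.1 - 1 + (midOf F p.1.1 - (p.1.1 - 1)) = midOf F p.1.1
  obtain ⟨t, ht, hpat⟩ := str hF.2 (mem_runFinset.mp p.2)
  rw [midOf_eq (mem_runFinset.mp p.2).1 ht hpat]
  have := (mem_runFinset.mp p.2).1
  omega

lemma gright {h₀ : Fin n → Fin 3} (hh₀ : ∀ i, outcome n h₀ i = o i)
    (f : ∀ p : {p : ℕ × ℕ // p ∈ runFinset n o}, Fin (p.1.2 + 1))
    (p : {p : ℕ × ℕ // p ∈ runFinset n o}) :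
    toMid (patch n o (extFn n h₀) f) (patch_good (extGood hh₀) f) p = f p := by
  apply Fin.ext
  show midOf (patch n o (extFn n h₀) f) p.1.1 - (p.1.1 - 1) = (f p : ℕ)
  rw [patch_mid]
  have := (mem_runFinset.mp p.2).1
  omega

lemma toMid_bij {h₀ : Fin n → Fin 3} (hh₀ : ∀ i, outcome n h₀ i = o i) :
    Function.Bijective (fun F : {F : ℕ → Fin 3 // GoodF n o F} => toMid F.1 F.2) := by
  constructor
  · intro F G h
    apply Subtype.ext
    apply good_inj F.2 G.2
    intro p
    obtain ⟨t, ht, hpat⟩ := str F.2.2 (mem_runFinset.mp p.2)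
    obtain ⟨t', ht', hpat'⟩ := str G.2.2 (mem_runFinset.mp p.2)
    have h1 := midOf_eq (mem_runFinset.mp p.2).1 ht hpat
    have h2 := midOf_eq (mem_runFinset.mp p.2).1 ht' hpat'
    have h3 : midOf F.1 p.1.1 - (p.1.1 - 1) = midOf G.1 p.1.1 - (p.1.1 - 1) :=
      congrArg Fin.val (congrFun h p)
    rw [h1, h2] at h3 ⊢
    have := (mem_runFinset.mp p.2).1
    omega
  · intro f
    refine ⟨⟨patch n o (extFn n h₀) f, patch_good (extGood hh₀) f⟩, ?_⟩
    show toMid (patch n o (extFn n h₀) f) (patch_good (extGood hh₀) f) = f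
    funext p
    exact gright hh₀ f p

lemma hist_bij :
    Function.Bijective (fun h : {h : Fin n → Fin 3 // ∀ i, outcome n h i = o i} =>
      (⟨extFn n h.1, extGood h.2⟩ : {F : ℕ → Fin 3 // GoodF n o F})) := by
  constructor
  · intro a b hab
    apply Subtype.ext
    funext c
    have hv : extFn n a.1 (c : ℕ) = extFn n b.1 (c : ℕ) :=
      congrFun (congrArg Subtype.val hab) (c : ℕ)
    show a.1 c = b.1 c
    unfold extFn at hv
    rw [dif_pos c.isLt, dif_pos c.isLt] at hv
    simpa using hv
  · intro F
    refine ⟨⟨fun c => F.1 c, fun i => ?_⟩, ?_⟩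
    · rw [outcome_eq_Om]
      have he : extFn n (fun c : Fin n => F.1 c) = F.1 := by
        funext c
        unfold extFn
        split_ifs with hc
        · rfl
        · exact (F.2.1 c (by omega)).symm
      rw [he]
      exact F.2.2 i
    · apply Subtype.ext
      show extFn n (fun c : Fin n => F.1 c) = F.1
      funext c
      unfold extFn
      split_ifs with hc
      · rfl
      · exact (F.2.1 c (by omega)).symm

end Final

/-- Path Multiplicity Theorem (outcome form): the number of histories of the Three Rows
Game on `n` columns with outcome `o` is the product over the runs `r` of `o` of
`ℓ(r) + 1`. -/
theorem path_multiplicity (n : ℕ) (o : ℕ → ℕ)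
    (hex : ∃ h : Fin n → Fin 3, ∀ i, outcome n h i = o i) :
    Nat.card {h : Fin n → Fin 3 // ∀ i, outcome n h i = o i} =
      ∏ p ∈ runFinset n o, (p.2 + 1) := by
  obtain ⟨h₀, hh₀⟩ := hex
  have e1 : Nat.card {h : Fin n → Fin 3 // ∀ i, outcome n h i = o i} =
      Nat.card {F : ℕ → Fin 3 // GoodF n o F} :=
    Nat.card_eq_of_bijective _ hist_bij
  have e2 : Nat.card {F : ℕ → Fin 3 // GoodF n o F} =
      Nat.card (∀ p : {p : ℕ × ℕ // p ∈ runFinset n o}, Fin (p.1.2 + 1)) :=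
    Nat.card_eq_of_bijective _ (toMid_bij hh₀)
  rw [e1, e2, Nat.card_pi]
  simp only [Nat.card_eq_fintype_card, Fintype.card_fin]
  rw [← Finset.prod_coe_sort (runFinset n o) (fun p => p.2 + 1)]
end
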